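/- Let A generate a C₀-semigroup having an exponential dichotomy, and let B generate a C₀-semigroup. If the Yosida distance d_Y(A,B) is sufficiently small (with a bound depending only on the growth constants M, ω of both semigroups and the dichotomy constants of A), then the semigroup generated by B also has an exponential dichotomy. -/

import Mathlib

open Filter

open NormedSpace in
lemma exp_sub_exp_norm_le {𝔸 : Type*} [NormedRing 𝔸] [NormedAlgebra ℂ 𝔸] [CompleteSpace 𝔸]
    (A B : 𝔸) (c : ℝ)
    (hA : ∀ t : ℝ, t ∈ Set.Icc (0:ℝ) 1 → ‖exp ((t:ℂ) • A)‖ ≤ c)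
    (hB : ∀ t : ℝ, t ∈ Set.Icc (0:ℝ) 1 → ‖exp ((t:ℂ) • B)‖ ≤ c) :
    ‖exp A - exp B‖ ≤ c * c * ‖A - B‖ := by
  have hc0 : 0 ≤ c := le_trans (norm_nonneg _) (hA 0 ⟨le_rfl, zero_le_one⟩)
  set f : ℝ → 𝔸 := fun s => exp ((1 - (s:ℂ)) • B) * exp ((s:ℂ) • A) with hf
  set f' : ℝ → 𝔸 := fun s => exp ((1 - (s:ℂ)) • B) * ((A - B) * exp ((s:ℂ) • A)) with hf'
  have hderiv : ∀ s : ℝ, HasDerivAt f (f' s) s := by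
    intro s
    have hcurve1 : HasDerivAt (fun s : ℝ => 1 - (s:ℂ)) (-1 : ℂ) s := by
      simpa using (Complex.ofRealCLM.hasDerivAt (x := s)).const_sub 1
    have hcurve2 : HasDerivAt (fun s : ℝ => (s:ℂ)) (1 : ℂ) s := by
      exact Complex.ofRealCLM.hasDerivAt (x := s)
    have hg : HasDerivAt (fun s : ℝ => exp ((1 - (s:ℂ)) • B))
        ((-1 : ℂ) • (exp ((1 - (s:ℂ)) • B) * B)) s :=
      by have := HasDerivAt.scomp s (hasDerivAt_exp_smul_const B (1 - (s:ℂ))) hcurve1; exact this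
    have hk : HasDerivAt (fun s : ℝ => exp ((s:ℂ) • A))
        ((1 : ℂ) • (exp ((s:ℂ) • A) * A)) s :=
      HasDerivAt.scomp s (hasDerivAt_exp_smul_const A ((s:ℂ))) hcurve2
    have := hg.mul hk
    convert this using 1
    · rfl
    have hcommA : exp ((s:ℂ) • A) * A = A * exp ((s:ℂ) • A) :=
      (((Commute.refl A).smul_left ((s:ℂ))).exp_left).eq
    simp only [one_smul, neg_one_smul, hf']
    rw [hcommA]
    noncomm_ring
  have hcont : Continuous f' := by
    apply Continuous.mul
    · exact (continuous_iff_continuousAt.2 fun x => (exp_analytic (𝕂 := ℂ) x).continuousAt).comp (by fun_prop)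
    · exact Continuous.mul continuous_const ((continuous_iff_continuousAt.2 fun x => (exp_analytic (𝕂 := ℂ) x).continuousAt).comp (by fun_prop))
  have hFTC : ∫ s in (0:ℝ)..1, f' s = f 1 - f 0 :=
    intervalIntegral.integral_eq_sub_of_hasDerivAt (fun t _ => hderiv t)
      (hcont.intervalIntegrable 0 1)
  have hf1 : f 1 = exp A := by simp [hf]
  have hf0 : f 0 = exp B := by simp [hf]
  have hbound : ‖∫ s in (0:ℝ)..1, f' s‖ ≤ c * c * ‖A - B‖ * |(1:ℝ) - 0| := by
    apply intervalIntegral.norm_integral_le_of_norm_le_const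
    intro s hs
    rw [Set.uIoc_of_le (zero_le_one : (0:ℝ) ≤ 1)] at hs
    have hs' : s ∈ Set.Icc (0:ℝ) 1 := ⟨le_of_lt hs.1, hs.2⟩
    have h1s : (1 - s : ℝ) ∈ Set.Icc (0:ℝ) 1 := ⟨by linarith [hs'.2], by linarith [hs'.1]⟩
    have hB' : ‖exp ((1 - (s:ℂ)) • B)‖ ≤ c := by
      have := hB (1 - s) h1s
      push_cast at this ⊢
      exact this
    have hA' : ‖exp ((s:ℂ) • A)‖ ≤ c := hA s hs'
    calc ‖f' s‖ ≤ ‖exp ((1 - (s:ℂ)) • B)‖ * (‖A - B‖ * ‖exp ((s:ℂ) • A)‖) :=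
          le_trans (norm_mul_le _ _) (by gcongr; exact norm_mul_le _ _)
      _ ≤ c * (‖A - B‖ * c) := by gcongr
      _ = c * c * ‖A - B‖ := by ring
  rw [← hf1, ← hf0, ← hFTC]
  simpa using hbound

/-- Let `A` generate a `C₀`-semigroup `(T(t))` with `‖T(t)‖ ≤ Me^{ωt}` having
an exponential dichotomy (`σ(T(1))` misses the unit circle). Then there is `δ > 0`
(depending only on `M`, `ω` and the dichotomy data of `A`) such that for any generator `B` of
a `C₀`-semigroup `(S(t))` with `‖S(t)‖ ≤ Me^{ωt}` (encoded via its Yosida approximations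
`Blam` and those `Alam` of `A`, with the standard approximation properties), if the Yosida
distance `d_Y(A,B) = limsup_{λ→∞}‖Alam − Blam‖ < δ`, then `(S(t))` also has an exponential
dichotomy. -/
theorem yosida_stmt10 {X : Type*} [NormedAddCommGroup X] [NormedSpace ℂ X] [CompleteSpace X]
    (T : ℝ → (X →L[ℂ] X)) (Alam : ℝ → (X →L[ℂ] X)) (M ω : ℝ)
    (hT0 : T 0 = 1)
    (hTadd : ∀ s t : ℝ, 0 ≤ s → 0 ≤ t → T (s + t) = T s * T t)
    (hTcont : ∀ x : X, ContinuousOn (fun t : ℝ => T t x) (Set.Ici 0))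
    (hT : ∀ t : ℝ, 0 ≤ t → ‖T t‖ ≤ M * Real.exp (ω * t))
    (hAexp : ∀ lam t : ℝ, 0 ≤ t →
      ‖NormedSpace.exp ((t : ℂ) • Alam lam)‖ ≤ M * Real.exp (2 * ω * t))
    (hAconv : ∀ t : ℝ, 0 ≤ t → ∀ x : X,
      Tendsto (fun lam : ℝ => NormedSpace.exp ((t : ℂ) • Alam lam) x) atTop (nhds (T t x)))
    (hdich : spectrum ℂ (T 1) ∩ {z : ℂ | ‖z‖ = 1} = ∅) :
    ∃ δ > 0, ∀ S Blam : ℝ → (X →L[ℂ] X),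
      S 0 = 1 →
      (∀ s t : ℝ, 0 ≤ s → 0 ≤ t → S (s + t) = S s * S t) →
      (∀ x : X, ContinuousOn (fun t : ℝ => S t x) (Set.Ici 0)) →
      (∀ t : ℝ, 0 ≤ t → ‖S t‖ ≤ M * Real.exp (ω * t)) →
      (∀ lam t : ℝ, 0 ≤ t →
        ‖NormedSpace.exp ((t : ℂ) • Blam lam)‖ ≤ M * Real.exp (2 * ω * t)) →
      (∀ t : ℝ, 0 ≤ t → ∀ x : X,
        Tendsto (fun lam : ℝ => NormedSpace.exp ((t : ℂ) • Blam lam) x) atTop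
          (nhds (S t x))) →
      IsBoundedUnder (· ≤ ·) atTop (fun lam : ℝ => ‖Alam lam - Blam lam‖) →
      Filter.limsup (fun lam : ℝ => ‖Alam lam - Blam lam‖) atTop < δ →
      spectrum ℂ (S 1) ∩ {z : ℂ | ‖z‖ = 1} = ∅ := by
  have hM0 : 0 ≤ M := le_trans (norm_nonneg (T 0)) (by simpa using hT 0 le_rfl)
  set c : ℝ := M * Real.exp (2 * |ω|) with hc
  have hc0 : 0 ≤ c := by positivity
  set C : ℝ := c ^ 2 with hCdef
  -- uniform bound on exponentials of Yosida approximants on [0,1]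
  have hexp_bd : ∀ (G : ℝ → (X →L[ℂ] X)),
      (∀ lam t : ℝ, 0 ≤ t → ‖NormedSpace.exp ((t : ℂ) • G lam)‖ ≤ M * Real.exp (2 * ω * t)) →
      ∀ lam : ℝ, ∀ t : ℝ, t ∈ Set.Icc (0:ℝ) 1 →
        ‖NormedSpace.exp ((t : ℂ) • G lam)‖ ≤ c := by
    intro G hG lam t ht
    refine (hG lam t ht.1).trans ?_
    have : 2 * ω * t ≤ 2 * |ω| := by
      have h1 : ω * t ≤ |ω| * t := mul_le_mul_of_nonneg_right (le_abs_self ω) ht.1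
      have h2 : |ω| * t ≤ |ω| * 1 := mul_le_mul_of_nonneg_left ht.2 (abs_nonneg ω)
      nlinarith
    exact mul_le_mul_of_nonneg_left (Real.exp_le_exp.mpr this) hM0
  -- openness of hyperbolicity
  have hU : IsOpen { x : X →L[ℂ] X | IsUnit x } := Units.isOpen
  set K := (fun z : ℂ => algebraMap ℂ (X →L[ℂ] X) z - T 1) '' Metric.sphere (0:ℂ) 1 with hK
  have hKc : IsCompact K :=
    (isCompact_sphere (0:ℂ) 1).image (by fun_prop)
  have hKU : K ⊆ { x : X →L[ℂ] X | IsUnit x } := by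
    rintro x ⟨z, hz, rfl⟩
    have hz1 : ‖z‖ = 1 := by simpa using hz
    have hznot : z ∉ spectrum ℂ (T 1) := by
      intro hzin
      have : z ∈ spectrum ℂ (T 1) ∩ {z : ℂ | ‖z‖ = 1} := ⟨hzin, hz1⟩
      rw [hdich] at this
      exact this
    exact spectrum.notMem_iff.mp hznot
  obtain ⟨ε, hε, hthick⟩ := hKc.exists_thickening_subset_open hU hKU
  refine ⟨ε / (2 * (C + 1)), by positivity, ?_⟩
  intro S Blam hS0 hSadd hScont hS hBexp hBconv hbdd hlim
  set δ := ε / (2 * (C + 1)) with hδdef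
  have hδ0 : 0 < δ := by positivity
  have hev : ∀ᶠ lam in atTop, ‖Alam lam - Blam lam‖ < δ :=
    eventually_lt_of_limsup_lt hlim hbdd
  -- key norm estimate
  have key : ‖S 1 - T 1‖ ≤ C * δ := by
    refine ContinuousLinearMap.opNorm_le_bound _ (by positivity) (fun x => ?_)
    have htend : Tendsto
        (fun lam : ℝ => ‖NormedSpace.exp ((1 : ℂ) • Blam lam) x
          - NormedSpace.exp ((1 : ℂ) • Alam lam) x‖) atTop
        (nhds ‖S 1 x - T 1 x‖) := by
      have := ((hBconv 1 zero_le_one x).sub (hAconv 1 zero_le_one x)).norm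
      simpa using this
    have hev' : ∀ᶠ lam in atTop,
        ‖NormedSpace.exp ((1 : ℂ) • Blam lam) x
          - NormedSpace.exp ((1 : ℂ) • Alam lam) x‖ ≤ C * δ * ‖x‖ := by
      filter_upwards [hev] with lam hlam
      have h1 : ‖NormedSpace.exp ((1 : ℂ) • Blam lam) x
          - NormedSpace.exp ((1 : ℂ) • Alam lam) x‖
          ≤ ‖NormedSpace.exp ((1 : ℂ) • Blam lam)
            - NormedSpace.exp ((1 : ℂ) • Alam lam)‖ * ‖x‖ := by
        rw [← ContinuousLinearMap.sub_apply]
        exact ContinuousLinearMap.le_opNorm _ x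
      have h2 : ‖NormedSpace.exp (Blam lam) - NormedSpace.exp (Alam lam)‖
          ≤ c * c * ‖Blam lam - Alam lam‖ :=
        exp_sub_exp_norm_le (Blam lam) (Alam lam) c
          (hexp_bd Blam hBexp lam) (hexp_bd Alam hAexp lam)
      have h3 : ‖Blam lam - Alam lam‖ < δ := by rwa [norm_sub_rev]
      calc ‖NormedSpace.exp ((1 : ℂ) • Blam lam) x
              - NormedSpace.exp ((1 : ℂ) • Alam lam) x‖
          ≤ ‖NormedSpace.exp ((1 : ℂ) • Blam lam)
              - NormedSpace.exp ((1 : ℂ) • Alam lam)‖ * ‖x‖ := h1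
        _ = ‖NormedSpace.exp (Blam lam) - NormedSpace.exp (Alam lam)‖ * ‖x‖ := by
              rw [one_smul, one_smul]
        _ ≤ (c * c * ‖Blam lam - Alam lam‖) * ‖x‖ := by gcongr
        _ ≤ (c * c * δ) * ‖x‖ := by gcongr
        _ = C * δ * ‖x‖ := by rw [hCdef]; ring
    have : ‖S 1 x - T 1 x‖ ≤ C * δ * ‖x‖ := le_of_tendsto htend hev'
    simpa [ContinuousLinearMap.sub_apply] using this
  have hlt : ‖S 1 - T 1‖ < ε := by
    refine key.trans_lt ?_
    rw [hδdef, mul_div_assoc', div_lt_iff₀ (by positivity)]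
    have hC0 : 0 ≤ C := sq_nonneg c
    nlinarith
  -- conclude
  rw [Set.eq_empty_iff_forall_notMem]
  rintro z ⟨hzspec, hz1⟩
  have hz1' : ‖z‖ = 1 := hz1
  have hmem : algebraMap ℂ (X →L[ℂ] X) z - S 1 ∈ Metric.thickening ε K := by
    rw [Metric.mem_thickening_iff]
    refine ⟨algebraMap ℂ (X →L[ℂ] X) z - T 1, ⟨z, by simpa using hz1', rfl⟩, ?_⟩
    rw [dist_eq_norm]
    have : (algebraMap ℂ (X →L[ℂ] X) z - S 1) - (algebraMap ℂ (X →L[ℂ] X) z - T 1)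
        = T 1 - S 1 := by abel
    rw [this, norm_sub_rev]
    exact hlt
  exact (spectrum.notMem_iff.mpr (hthick hmem)) hzspec
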